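/- Let n, m ≥ 1. If there exists a matrix A ∈ M_m(ℕ) with A^n = 2·I_m (i.e., the equation X^n − 2 = 0 is solvable in M_m(ℕ)), then n divides m. -/

import Mathlib

/-- If `n, m ≥ 1` and the equation `X ^ n - 2 = 0` is solvable in `M_m(ℕ)`
(i.e. some `A ∈ M_m(ℕ)` satisfies `A ^ n = 2 • I_m`), then `n ∣ m`. -/
theorem stmt2 (n m : ℕ) (hn : 1 ≤ n) (hm : 1 ≤ m)
    (h : ∃ A : Matrix (Fin m) (Fin m) ℕ,
        A ^ n = (2 : ℕ) • (1 : Matrix (Fin m) (Fin m) ℕ)) :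
    n ∣ m := by
  obtain ⟨A, hA⟩ := h
  -- move to ℤ
  set B : Matrix (Fin m) (Fin m) ℤ := A.map (Nat.cast : ℕ → ℤ) with hB
  have hBpow : B ^ n = (2 : ℤ) • (1 : Matrix (Fin m) (Fin m) ℤ) := by
    have h1 : B = (Nat.castRingHom ℤ).mapMatrix A := rfl
    rw [h1, ← map_pow, hA]
    ext i j
    simp only [RingHom.mapMatrix_apply, Matrix.map_apply, Matrix.smul_apply,
      Matrix.one_apply, smul_eq_mul]
    split <;> simp
  have hdet : (B.det) ^ n = 2 ^ m := by
    have := congrArg Matrix.det hBpow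
    rw [Matrix.det_pow, Matrix.det_smul, Matrix.det_one, Fintype.card_fin] at this
    simpa using this
  -- to ℕ via natAbs
  set a : ℕ := B.det.natAbs with ha
  have hnat : a ^ n = 2 ^ m := by
    have := congrArg Int.natAbs hdet
    simpa [Int.natAbs_pow] using this
  have ha0 : a ≠ 0 := by
    intro h0
    rw [h0, zero_pow (by omega)] at hnat
    exact absurd hnat.symm (pow_ne_zero _ (by norm_num))
  have := congrArg (padicValNat 2) hnat
  rw [padicValNat.pow, padicValNat.prime_pow] at this
  exact ⟨_, this.symm⟩
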